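/- Let Φ and h be as in the canonical construction with d = 1 + rλ + sλ′, let Υ be a clause minimum prime pure Horn CNF representation of h, and define the labelings f_j from Υ as in the construction. Then for every index j ∈ [t], the labeling f_j is a tight total-cover of the refined Label Cover instance L of minimum cost, i.e., κ(f_j) = κ(L). -/

import Mathlib

open Finset

/-- A clause, given by its (fin)sets of positive and negative variables. -/
structure Clause (V : Type*) where
  pos : Finset V
  neg : Finset V
deriving DecidableEq

namespace Clause

variable {V : Type*}

/-- A genuine clause: no variable occurs both positively and negatively. -/
def IsClause (C : Clause V) : Prop := Disjoint C.pos C.neg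

/-- Evaluation of a clause (as a disjunction of literals) under an assignment. -/
def eval (C : Clause V) (a : V → Bool) : Prop :=
  (∃ v ∈ C.pos, a v = true) ∨ (∃ v ∈ C.neg, a v = false)

/-- A pure (definite) Horn clause: exactly one positive literal, its head. -/
def IsPureHorn (C : Clause V) : Prop := ∃ v, C.pos = {v}

end Clause

variable {V : Type*}

/-- Conjunction (as a predicate on assignments) of a set of clauses. -/
def evalSet (S : Set (Clause V)) (a : V → Bool) : Prop := ∀ C ∈ S, C.eval a

/-- Conjunction of the clauses of a CNF, i.e. of a finite set of clauses. -/
def evalCNF (Φ : Finset (Clause V)) (a : V → Bool) : Prop := ∀ C ∈ Φ, C.eval a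

/-- A CNF represents a Boolean function `h`. -/
def Represents (Φ : Finset (Clause V)) (h : (V → Bool) → Prop) : Prop :=
  ∀ a, evalCNF Φ a ↔ h a

/-- A pure Horn CNF: all clauses are pure Horn. -/
def IsPureHornCNF (Φ : Finset (Clause V)) : Prop :=
  ∀ C ∈ Φ, C.IsClause ∧ C.IsPureHorn

/-- The forward chaining closure of a set `Q` of variables with respect to the
pure Horn CNF `Φ`: the smallest set containing `Q` such that whenever `Φ` contains
a clause `S → v` with `S` inside the set, also `v` belongs to it. -/
def fcClosure (Φ : Finset (Clause V)) (Q : Set V) : Set V :=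
  ⋂₀ {T : Set V | Q ⊆ T ∧ ∀ C ∈ Φ, ∀ v : V, C.pos = {v} → ↑C.neg ⊆ T → v ∈ T}

/-- `C` is an implicate of `h`: every assignment falsifying `C` falsifies `h`. -/
def Implicate (h : (V → Bool) → Prop) (C : Clause V) : Prop :=
  ∀ a, ¬ C.eval a → ¬ h a

/-- `C` is a prime implicate of `h`: an implicate from which no literal can be
deleted while remaining an implicate. -/
def PrimeImplicate [DecidableEq V] (h : (V → Bool) → Prop) (C : Clause V) : Prop :=
  C.IsClause ∧ Implicate h C ∧
  (∀ v ∈ C.pos, ¬ Implicate h ⟨C.pos.erase v, C.neg⟩) ∧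
  (∀ v ∈ C.neg, ¬ Implicate h ⟨C.pos, C.neg.erase v⟩)

/-- `C₁` and `C₂` are resolvable on `v`: `v` occurs positively in `C₁`, negatively in
`C₂`, and no other variable occurs with opposite signs in them. -/
def Resolvable (C₁ C₂ : Clause V) (v : V) : Prop :=
  v ∈ C₁.pos ∧ v ∈ C₂.neg ∧
  ∀ w, w ≠ v → ¬(w ∈ C₁.pos ∧ w ∈ C₂.neg) ∧ ¬(w ∈ C₁.neg ∧ w ∈ C₂.pos)

/-- The resolvent `R(C₁,C₂) = (C₁ \ {v}) ∪ (C₂ \ {v̄})`. -/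
def resolventOf [DecidableEq V] (C₁ C₂ : Clause V) (v : V) : Clause V :=
  ⟨C₁.pos.erase v ∪ C₂.pos, C₁.neg ∪ C₂.neg.erase v⟩

/-- A set of clauses closed under resolution. -/
def ResClosed [DecidableEq V] (S : Set (Clause V)) : Prop :=
  ∀ C₁ ∈ S, ∀ C₂ ∈ S, ∀ v, Resolvable C₁ C₂ v → resolventOf C₁ C₂ v ∈ S

/-- The resolution closure of a set of clauses. -/
def resClosure [DecidableEq V] (S : Set (Clause V)) : Set (Clause V) :=
  ⋂₀ {T : Set (Clause V) | S ⊆ T ∧ ResClosed T}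

/-- `I(h)`: the resolution closure of the set of prime implicates of `h`. -/
def implSet [DecidableEq V] (h : (V → Bool) → Prop) : Set (Clause V) :=
  resClosure {C | PrimeImplicate h C}

/-- An exclusive set of clauses of `h`. -/
def ExclusiveSet [DecidableEq V] (h : (V → Bool) → Prop) (Xs : Set (Clause V)) : Prop :=
  Xs ⊆ implSet h ∧
  ∀ C₁ ∈ implSet h, ∀ C₂ ∈ implSet h, ∀ v, Resolvable C₁ C₂ v →
    resolventOf C₁ C₂ v ∈ Xs → C₁ ∈ Xs ∧ C₂ ∈ Xs

/-- The set of variables occurring in a CNF. -/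
def varsOf [DecidableEq V] (Φ : Finset (Clause V)) : Finset V :=
  Φ.biUnion fun C => C.pos ∪ C.neg


/-- A Label Cover instance: a bipartite graph with parts `X` and `Y` and edge set `E`,
label sets `A` (for `X`-vertices) and `B` (for `Y`-vertices), and a nonempty
constraint relation `cst e ⊆ A × B` for every edge `e ∈ E`. -/
structure LabelCover (X Y A B : Type*) where
  E : Finset (X × Y)
  cst : X × Y → Finset (A × B)
  cst_nonempty : ∀ e ∈ E, (cst e).Nonempty

namespace LabelCover

variable {X Y A B : Type*}

/-- A labeling `(f, g)` covers an edge `(x,y)` if for every label `b ∈ g y` there is a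
label `a ∈ f x` with `(a, b)` admissible for the edge. -/
def Covers (I : LabelCover X Y A B) (f : X → Finset A) (g : Y → Finset B)
    (e : X × Y) : Prop :=
  ∀ b ∈ g e.2, ∃ a ∈ f e.1, (a, b) ∈ I.cst e

/-- A total-cover: a labeling (assigning a nonempty label set to every `Y`-vertex)
covering every edge. -/
def IsTotalCover (I : LabelCover X Y A B) (f : X → Finset A) (g : Y → Finset B) : Prop :=
  (∀ y, (g y).Nonempty) ∧ ∀ e ∈ I.E, I.Covers f g e

/-- A total-cover is tight if every `Y`-vertex receives exactly one label. -/
def Tight (g : Y → Finset B) : Prop := ∀ y, (g y).card = 1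

end LabelCover

/-- The cost of a labeling: the average number of labels assigned to `X`-vertices. -/
def lcCost {X A : Type*} [Fintype X] (f : X → Finset A) : ℚ :=
  (∑ x, ((f x).card : ℚ)) / (Fintype.card X : ℚ)


/-- The labels of the refined Label Cover instance: `L ∪ L′`, where `L = ⋃_x L_x`
with `L_x = {x} × A` and `L′ = ⋃_y L′_y` with `L′_y = {y} × B`. -/
abbrev Lab (X Y A B : Type*) := (X × A) ⊕ (Y × B)

/-- The propositional variables of the canonical pure Horn CNF construction:
`u ℓ` for labels `ℓ ∈ L ∪ L′`, `e x y i` and `el x y ℓ′ i` for edges `(x,y)`,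
labels `ℓ′ ∈ L′_y` and indices `i ∈ [d]`, and `v j` for `j ∈ [t]`. -/
inductive PV (X Y A B : Type*) where
  | u : Lab X Y A B → PV X Y A B
  | e : X → Y → ℕ → PV X Y A B
  | el : X → Y → B → ℕ → PV X Y A B
  | v : ℕ → PV X Y A B
deriving DecidableEq

section Canonical

variable {X Y A B : Type*} [Fintype X] [Fintype Y] [Fintype A] [Fintype B]
  [DecidableEq X] [DecidableEq Y] [DecidableEq A] [DecidableEq B]

/-- The (open) neighborhood `N(y) = {z ∈ X : (z,y) ∈ E}`. -/
def Nbr (I : LabelCover X Y A B) (y : Y) : Finset X :=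
  Finset.univ.filter fun z => (z, y) ∈ I.E

/-- Clauses (a): `u(ℓ) ∧ u(ℓ′) → e(x,y,ℓ′,i)` for `(x,y) ∈ E`, `(ℓ,ℓ′) ∈ Π_{(x,y)}`,
`i ∈ [d]`. -/
def clA (I : LabelCover X Y A B) (d : ℕ) : Finset (Clause (PV X Y A B)) :=
  (I.E ×ˢ Finset.Icc 1 d).biUnion fun p =>
    (I.cst p.1).image fun ab =>
      ⟨{PV.el p.1.1 p.1.2 ab.2 p.2},
       {PV.u (Sum.inl (p.1.1, ab.1)), PV.u (Sum.inr (p.1.2, ab.2))}⟩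

/-- Clauses (b): `⋀_{z ∈ N(y)} e(z,y,ℓ′,i) → e(x,y,i)` for `(x,y) ∈ E`, `ℓ′ ∈ L′_y`,
`i ∈ [d]`. -/
def clB (I : LabelCover X Y A B) (d : ℕ) : Finset (Clause (PV X Y A B)) :=
  ((I.E ×ˢ (Finset.univ : Finset B)) ×ˢ Finset.Icc 1 d).image fun p =>
    ⟨{PV.e p.1.1.1 p.1.1.2 p.2},
     (Nbr I p.1.1.2).image fun z => PV.el z p.1.1.2 p.1.2 p.2⟩

/-- Clauses (c): `e(x,y,i) → e(x,y,ℓ′,i)` for `(x,y) ∈ E`, `ℓ′ ∈ L′_y`, `i ∈ [d]`. -/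
def clC (I : LabelCover X Y A B) (d : ℕ) : Finset (Clause (PV X Y A B)) :=
  ((I.E ×ˢ (Finset.univ : Finset B)) ×ˢ Finset.Icc 1 d).image fun p =>
    ⟨{PV.el p.1.1.1 p.1.1.2 p.1.2 p.2}, {PV.e p.1.1.1 p.1.1.2 p.2}⟩

/-- The common body of the clauses (d): all variables `e(x,y,i)`, `(x,y) ∈ E`, `i ∈ [d]`. -/
def bigBody (I : LabelCover X Y A B) (d : ℕ) : Finset (PV X Y A B) :=
  (I.E ×ˢ Finset.Icc 1 d).image fun p => PV.e p.1.1 p.1.2 p.2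

/-- Clauses (d): `⋀_{i ∈ [d]} ⋀_{(x,y) ∈ E} e(x,y,i) → u(ℓ)` for `ℓ ∈ L ∪ L′`. -/
def clD (I : LabelCover X Y A B) (d : ℕ) : Finset (Clause (PV X Y A B)) :=
  (Finset.univ : Finset (Lab X Y A B)).image fun ℓ => ⟨{PV.u ℓ}, bigBody I d⟩

/-- Clauses (e): `v(j) → u(ℓ)` for `j ∈ [t]`, `ℓ ∈ L ∪ L′`. -/
def clE (X Y A B : Type*) [Fintype X] [Fintype Y] [Fintype A] [Fintype B]
    [DecidableEq X] [DecidableEq Y] [DecidableEq A] [DecidableEq B]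
    (t : ℕ) : Finset (Clause (PV X Y A B)) :=
  (Finset.Icc 1 t ×ˢ (Finset.univ : Finset (Lab X Y A B))).image fun p =>
    ⟨{PV.u p.2}, {PV.v p.1}⟩

/-- The canonical formula `Ψ`: clauses of types (a)–(d). -/
def PsiCNF (I : LabelCover X Y A B) (d : ℕ) : Finset (Clause (PV X Y A B)) :=
  clA I d ∪ clB I d ∪ clC I d ∪ clD I d

/-- The canonical formula `Φ`: clauses of types (a)–(e). -/
def PhiCNF (I : LabelCover X Y A B) (d t : ℕ) : Finset (Clause (PV X Y A B)) :=
  PsiCNF I d ∪ clE X Y A B t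

/-- The pure Horn function `h` represented by the canonical formula `Φ`. -/
def hFun (I : LabelCover X Y A B) (d t : ℕ) : (PV X Y A B → Bool) → Prop :=
  fun a => evalCNF (PhiCNF I d t) a

/-- The pure Horn function `g` represented by the canonical formula `Ψ`. -/
def gFun (I : LabelCover X Y A B) (d : ℕ) : (PV X Y A B → Bool) → Prop :=
  fun a => evalCNF (PsiCNF I d) a

end Canonical


/-- The `X`-side labeling extracted from a representation `Υ` of `h`:
`f_j(x) = S_j ∩ L_x`, where `S_j` is the set of labels `ℓ` such that the clause
`v(j) → u(ℓ)` belongs to `Υ`. -/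
def fjX {X Y A B : Type*} [Fintype X] [Fintype Y] [Fintype A] [Fintype B]
    [DecidableEq X] [DecidableEq Y] [DecidableEq A] [DecidableEq B]
    (Υ : Finset (Clause (PV X Y A B))) (j : ℕ) (x : X) : Finset A :=
  Finset.univ.filter fun a =>
    (⟨{PV.u (Sum.inl (x, a))}, {PV.v j}⟩ : Clause (PV X Y A B)) ∈ Υ

/-- The `Y`-side labeling extracted from a representation `Υ` of `h`:
`f_j(y) = S_j ∩ L′_y`, where `S_j` is the set of labels `ℓ` such that the clause
`v(j) → u(ℓ)` belongs to `Υ`. -/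
def fjY {X Y A B : Type*} [Fintype X] [Fintype Y] [Fintype A] [Fintype B]
    [DecidableEq X] [DecidableEq Y] [DecidableEq A] [DecidableEq B]
    (Υ : Finset (Clause (PV X Y A B))) (j : ℕ) (y : Y) : Finset B :=
  Finset.univ.filter fun b =>
    (⟨{PV.u (Sum.inr (y, b))}, {PV.v j}⟩ : Clause (PV X Y A B)) ∈ Υ


/-! ### Auxiliary machinery -/

section AuxGeneral

variable {W : Type*}

/-- Forward chaining derivability from a set `Q` of variables using the clauses of `Φ`. -/
inductive Deriv (Φ : Finset (Clause W)) (Q : Set W) : W → Prop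
  | base {v : W} (hv : v ∈ Q) : Deriv Φ Q v
  | step {C : Clause W} {v : W} (hC : C ∈ Φ) (hpos : C.pos = {v})
      (hneg : ∀ w ∈ C.neg, Deriv Φ Q w) : Deriv Φ Q v

lemma satClosed {Φ : Finset (Clause W)} {Q : Set W} {a : W → Bool}
    (hΦ : evalCNF Φ a) (hQ : ∀ q ∈ Q, a q = true) :
    ∀ v, Deriv Φ Q v → a v = true := by
  intro v h
  induction h with
  | base hv => exact hQ _ hv
  | step hC hpos hneg ih =>
    rcases hΦ _ hC with ⟨w, hw, haw⟩ | ⟨z, hz, haz⟩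
    · rw [hpos, Finset.mem_singleton] at hw; exact hw ▸ haw
    · exact absurd (ih z hz) (by simp [haz])

lemma evalCNF_chi (Φ : Finset (Clause W)) (p : W → Prop) [DecidablePred p]
    (hph : ∀ C ∈ Φ, ∃ w, C.pos = {w})
    (hcl : ∀ C ∈ Φ, ∀ w, C.pos = {w} → (∀ z ∈ C.neg, p z) → p w) :
    evalCNF Φ (fun v => if p v then true else false) := by
  intro C hC
  obtain ⟨w, hw⟩ := hph C hC
  by_cases hall : ∀ z ∈ C.neg, p z
  · exact Or.inl ⟨w, by simp [hw], by simp [hcl C hC w hw hall]⟩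
  · push_neg at hall
    obtain ⟨z, hz, hpz⟩ := hall
    exact Or.inr ⟨z, hz, by simp [hpz]⟩

lemma eval_congr {C : Clause W} {a a' : W → Bool}
    (h : ∀ w, w ∈ C.pos ∨ w ∈ C.neg → a w = a' w) : C.eval a ↔ C.eval a' := by
  unfold Clause.eval
  constructor <;> rintro (⟨v, hv, hav⟩ | ⟨v, hv, hav⟩)
  · exact Or.inl ⟨v, hv, (h v (Or.inl hv)).symm ▸ hav⟩
  · exact Or.inr ⟨v, hv, (h v (Or.inr hv)).symm ▸ hav⟩
  · exact Or.inl ⟨v, hv, (h v (Or.inl hv)) ▸ hav⟩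
  · exact Or.inr ⟨v, hv, (h v (Or.inr hv)) ▸ hav⟩

lemma eval_horn {C : Clause W} {w : W} (hpos : C.pos = {w}) {a : W → Bool} :
    C.eval a ↔ (a w = true ∨ ∃ z ∈ C.neg, a z = false) := by
  unfold Clause.eval
  rw [hpos]
  simp

end AuxGeneral

lemma not_eval_iff {W : Type*} {C : Clause W} {a : W → Bool} :
    ¬ C.eval a ↔ (∀ z ∈ C.pos, a z = false) ∧ ∀ z ∈ C.neg, a z = true := by
  unfold Clause.eval
  push_neg
  simp [Bool.not_eq_true, Bool.not_eq_false]
section AuxCanonical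

set_option linter.unusedSectionVars false

variable {X Y A B : Type*} [Fintype X] [Fintype Y] [Fintype A] [Fintype B]
  [DecidableEq X] [DecidableEq Y] [DecidableEq A] [DecidableEq B]

lemma mem_clA' {I : LabelCover X Y A B} {d : ℕ} {C : Clause (PV X Y A B)} :
    C ∈ clA I d ↔ ∃ x y a b i, (x, y) ∈ I.E ∧ (a, b) ∈ I.cst (x, y) ∧ i ∈ Finset.Icc 1 d ∧
      C = ⟨{PV.el x y b i}, {PV.u (Sum.inl (x, a)), PV.u (Sum.inr (y, b))}⟩ := by
  simp only [clA, Finset.mem_biUnion, Finset.mem_product, Finset.mem_image, Prod.exists]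
  constructor
  · rintro ⟨p, q, i, ⟨hE, hi⟩, a, b, hab, rfl⟩
    exact ⟨p, q, a, b, i, hE, hab, hi, rfl⟩
  · rintro ⟨x, y, a, b, i, hE, hab, hi, rfl⟩
    exact ⟨x, y, i, ⟨hE, hi⟩, a, b, hab, rfl⟩

lemma mem_clB' {I : LabelCover X Y A B} {d : ℕ} {C : Clause (PV X Y A B)} :
    C ∈ clB I d ↔ ∃ x y b i, (x, y) ∈ I.E ∧ i ∈ Finset.Icc 1 d ∧
      C = ⟨{PV.e x y i}, (Nbr I y).image fun z => PV.el z y b i⟩ := by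
  simp only [clB, Finset.mem_image, Finset.mem_product, Finset.mem_univ, Prod.exists]
  constructor
  · rintro ⟨x, y, b, i, ⟨⟨hE, -⟩, hi⟩, rfl⟩
    · exact ⟨x, y, b, i, hE, hi, rfl⟩
  · rintro ⟨x, y, b, i, hE, hi, rfl⟩
    exact ⟨x, y, b, i, ⟨⟨hE, trivial⟩, hi⟩, rfl⟩

lemma mem_clC' {I : LabelCover X Y A B} {d : ℕ} {C : Clause (PV X Y A B)} :
    C ∈ clC I d ↔ ∃ x y b i, (x, y) ∈ I.E ∧ i ∈ Finset.Icc 1 d ∧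
      C = ⟨{PV.el x y b i}, {PV.e x y i}⟩ := by
  simp only [clC, Finset.mem_image, Finset.mem_product, Finset.mem_univ, Prod.exists]
  constructor
  · rintro ⟨x, y, b, i, ⟨⟨hE, -⟩, hi⟩, rfl⟩
    · exact ⟨x, y, b, i, hE, hi, rfl⟩
  · rintro ⟨x, y, b, i, hE, hi, rfl⟩
    exact ⟨x, y, b, i, ⟨⟨hE, trivial⟩, hi⟩, rfl⟩

lemma mem_clD' {I : LabelCover X Y A B} {d : ℕ} {C : Clause (PV X Y A B)} :
    C ∈ clD I d ↔ ∃ ℓ : Lab X Y A B, C = ⟨{PV.u ℓ}, bigBody I d⟩ := by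
  simp only [clD, Finset.mem_image, Finset.mem_univ, true_and]
  exact ⟨fun ⟨ℓ, h⟩ => ⟨ℓ, h.symm⟩, fun ⟨ℓ, h⟩ => ⟨ℓ, h.symm⟩⟩

lemma mem_clE' {t : ℕ} {C : Clause (PV X Y A B)} :
    C ∈ clE X Y A B t ↔ ∃ j ∈ Finset.Icc 1 t, ∃ ℓ : Lab X Y A B,
      C = ⟨{PV.u ℓ}, {PV.v j}⟩ := by
  simp only [clE, Finset.mem_image, Finset.mem_product, Finset.mem_univ, Prod.exists]
  constructor
  · rintro ⟨j, ℓ, ⟨hj, -⟩, rfl⟩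
    exact ⟨j, hj, ℓ, rfl⟩
  · rintro ⟨j, hj, ℓ, rfl⟩
    exact ⟨j, ℓ, ⟨hj, trivial⟩, rfl⟩

lemma mem_bigBody' {I : LabelCover X Y A B} {d : ℕ} {w : PV X Y A B} :
    w ∈ bigBody I d ↔ ∃ x y i, (x, y) ∈ I.E ∧ i ∈ Finset.Icc 1 d ∧ w = PV.e x y i := by
  simp only [bigBody, Finset.mem_image, Finset.mem_product, Prod.exists]
  constructor
  · rintro ⟨x, y, i, ⟨hE, hi⟩, rfl⟩
    exact ⟨x, y, i, hE, hi, rfl⟩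
  · rintro ⟨x, y, i, hE, hi, rfl⟩
    exact ⟨x, y, i, ⟨hE, hi⟩, rfl⟩

lemma mem_Nbr {I : LabelCover X Y A B} {y : Y} {z : X} :
    z ∈ Nbr I y ↔ (z, y) ∈ I.E := by
  simp [Nbr]

/-- Predicate describing the set `Cset` of all possible heads of clauses of `Φ`. -/
def CsetP (I : LabelCover X Y A B) (d : ℕ) : PV X Y A B → Prop
  | .u _ => True
  | .e x y i => (x, y) ∈ I.E ∧ i ∈ Finset.Icc 1 d
  | .el x y _ i => (x, y) ∈ I.E ∧ i ∈ Finset.Icc 1 d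
  | .v _ => False

/-- Every clause of `Φ` is definite with head in `Cset`. -/
lemma phi_head {I : LabelCover X Y A B} {d t : ℕ} {C : Clause (PV X Y A B)}
    (hC : C ∈ PhiCNF I d t) : ∃ w, C.pos = {w} ∧ CsetP I d w := by
  rcases Finset.mem_union.1 hC with hC | hC
  · rcases Finset.mem_union.1 hC with hC | hC
    · rcases Finset.mem_union.1 hC with hC | hC
      · rcases Finset.mem_union.1 hC with hC | hC
        · obtain ⟨x, y, a, b, i, hE, -, hi, rfl⟩ := mem_clA'.1 hC
          exact ⟨_, rfl, hE, hi⟩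
        · obtain ⟨x, y, b, i, hE, hi, rfl⟩ := mem_clB'.1 hC
          exact ⟨_, rfl, hE, hi⟩
      · obtain ⟨x, y, b, i, hE, hi, rfl⟩ := mem_clC'.1 hC
        exact ⟨_, rfl, hE, hi⟩
    · obtain ⟨ℓ, rfl⟩ := mem_clD'.1 hC
      exact ⟨_, rfl, trivial⟩
  · obtain ⟨j, hj, ℓ, rfl⟩ := mem_clE'.1 hC
    exact ⟨_, rfl, trivial⟩

/-- If a `v`-variable occurs in the body of a clause of `Φ`, then it is `v j` with
`j ∈ [t]` and the clause is an (e)-clause. -/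
lemma phi_v_in_neg {I : LabelCover X Y A B} {d t : ℕ} {C : Clause (PV X Y A B)} {k : ℕ}
    (hC : C ∈ PhiCNF I d t) (hk : PV.v k ∈ C.neg) : k ∈ Finset.Icc 1 t := by
  rcases Finset.mem_union.1 hC with hC | hC
  · exfalso
    rcases Finset.mem_union.1 hC with hC | hC
    · rcases Finset.mem_union.1 hC with hC | hC
      · rcases Finset.mem_union.1 hC with hC | hC
        · obtain ⟨x, y, a, b, i, -, -, -, rfl⟩ := mem_clA'.1 hC
          simp at hk
        · obtain ⟨x, y, b, i, -, -, rfl⟩ := mem_clB'.1 hC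
          simp only [Finset.mem_image] at hk
          obtain ⟨z, -, h⟩ := hk
          exact nomatch h
      · obtain ⟨x, y, b, i, -, -, rfl⟩ := mem_clC'.1 hC
        simp at hk
    · obtain ⟨ℓ, rfl⟩ := mem_clD'.1 hC
      obtain ⟨x, y, i, -, -, h⟩ := mem_bigBody'.1 hk
      exact nomatch h
  · obtain ⟨j, hj, ℓ, rfl⟩ := mem_clE'.1 hC
    simp only [Finset.mem_singleton] at hk
    exact (PV.v.injEq _ _ ▸ hk : k = j) ▸ hj

end AuxCanonical
section AuxDeriv

set_option linter.unusedSectionVars false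

variable {X Y A B : Type*} [Fintype X] [Fintype Y] [Fintype A] [Fintype B]
  [DecidableEq X] [DecidableEq Y] [DecidableEq A] [DecidableEq B]
  {I : LabelCover X Y A B} {d t : ℕ}

/-- Any derivable variable is in `Q` or in `Cset`. -/
lemma deriv_subset_cset {Q : Set (PV X Y A B)} {w : PV X Y A B}
    (h : Deriv (PhiCNF I d t) Q w) : w ∈ Q ∨ CsetP I d w := by
  induction h with
  | base hv => exact Or.inl hv
  | step hC hpos hneg ih =>
    obtain ⟨w', hw', hcs⟩ := phi_head hC
    rw [hpos] at hw'
    exact Or.inr ((Finset.singleton_inj.1 hw') ▸ hcs)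

/-- Removing an out-of-range `v`-variable from the sources. -/
lemma deriv_drop_v {Q : Set (PV X Y A B)} {k : ℕ} (hk : k ∉ Finset.Icc 1 t)
    {w : PV X Y A B} (h : Deriv (PhiCNF I d t) (Q ∪ {PV.v k}) w) :
    w = PV.v k ∨ Deriv (PhiCNF I d t) Q w := by
  induction h with
  | base hv =>
    rcases hv with hv | hv
    · exact Or.inr (Deriv.base hv)
    · exact Or.inl hv
  | step hC hpos hneg ih =>
    refine Or.inr (Deriv.step hC hpos fun z hz => ?_)
    rcases ih z hz with rfl | h
    · exact absurd (phi_v_in_neg hC hz) hk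
    · exact h

/-- From the sources `Q`, assuming all labels of a total cover have their `u`-variables
derivable, all in-range `e`- and `el`-variables are derivable (clauses (a),(b),(c)),
and hence (clause (d)) all `u`-variables are derivable. -/
lemma cover_derives {Φ₀ : Finset (Clause (PV X Y A B))} {Q : Set (PV X Y A B)}
    (hA : clA I d ⊆ Φ₀) (hB : clB I d ⊆ Φ₀) (hC : clC I d ⊆ Φ₀) (hD : clD I d ⊆ Φ₀)
    {f₀ : X → Finset A} {g₀ : Y → Finset B} (hcov : I.IsTotalCover f₀ g₀)
    (hu : ∀ z a, a ∈ f₀ z → Deriv Φ₀ Q (PV.u (Sum.inl (z, a))))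
    (hu' : ∀ y b, b ∈ g₀ y → Deriv Φ₀ Q (PV.u (Sum.inr (y, b)))) :
    (∀ x y i, (x, y) ∈ I.E → i ∈ Finset.Icc 1 d → Deriv Φ₀ Q (PV.e x y i)) ∧
    (∀ ℓ : Lab X Y A B, Deriv Φ₀ Q (PV.u ℓ)) ∧
    (∀ x y b i, (x, y) ∈ I.E → i ∈ Finset.Icc 1 d → Deriv Φ₀ Q (PV.el x y b i)) := by
  have he : ∀ x y i, (x, y) ∈ I.E → i ∈ Finset.Icc 1 d → Deriv Φ₀ Q (PV.e x y i) := by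
    intro x y i hE hi
    obtain ⟨b₀, hb₀⟩ := hcov.1 y
    have hel : ∀ z ∈ Nbr I y, Deriv Φ₀ Q (PV.el z y b₀ i) := by
      intro z hz
      rw [mem_Nbr] at hz
      obtain ⟨a, ha, hab⟩ := hcov.2 (z, y) hz b₀ hb₀
      refine Deriv.step (hA (mem_clA'.2 ⟨z, y, a, b₀, i, hz, hab, hi, rfl⟩)) rfl ?_
      intro w hw
      simp only [Finset.mem_insert, Finset.mem_singleton] at hw
      rcases hw with rfl | rfl
      · exact hu z a ha
      · exact hu' y b₀ hb₀
    refine Deriv.step (hB (mem_clB'.2 ⟨x, y, b₀, i, hE, hi, rfl⟩)) rfl ?_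
    intro w hw
    simp only [Finset.mem_image] at hw
    obtain ⟨z, hz, rfl⟩ := hw
    exact hel z hz
  refine ⟨he, fun ℓ => ?_, fun x y b i hE hi => ?_⟩
  · refine Deriv.step (hD (mem_clD'.2 ⟨ℓ, rfl⟩)) rfl ?_
    intro w hw
    obtain ⟨x, y, i, hE, hi, rfl⟩ := mem_bigBody'.1 hw
    exact he x y i hE hi
  · refine Deriv.step (hC (mem_clC'.2 ⟨x, y, b, i, hE, hi, rfl⟩)) rfl ?_
    intro w hw
    simp only [Finset.mem_singleton] at hw
    exact hw ▸ he x y i hE hi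

lemma clA_subset_phi : clA I d ⊆ PhiCNF I d t := by
  intro C hC
  exact Finset.mem_union.2 (Or.inl (Finset.mem_union.2 (Or.inl (Finset.mem_union.2
    (Or.inl (Finset.mem_union.2 (Or.inl hC)))))))

lemma clB_subset_phi : clB I d ⊆ PhiCNF I d t := by
  intro C hC
  exact Finset.mem_union.2 (Or.inl (Finset.mem_union.2 (Or.inl (Finset.mem_union.2
    (Or.inl (Finset.mem_union.2 (Or.inr hC)))))))

lemma clC_subset_phi : clC I d ⊆ PhiCNF I d t := by
  intro C hC
  exact Finset.mem_union.2 (Or.inl (Finset.mem_union.2 (Or.inl (Finset.mem_union.2 (Or.inr hC)))))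

lemma clD_subset_phi : clD I d ⊆ PhiCNF I d t := by
  intro C hC
  exact Finset.mem_union.2 (Or.inl (Finset.mem_union.2 (Or.inr hC)))

lemma clE_subset_phi : clE X Y A B t ⊆ PhiCNF I d t := fun _ hC => Finset.mem_union.2 (Or.inr hC)

/-- From the single source `v j` (with `j ∈ [t]`) everything in `Cset` is derivable. -/
lemma cset_deriv (hfeas : ∃ f g, I.IsTotalCover f g) {j : ℕ} (hj : j ∈ Finset.Icc 1 t)
    {w : PV X Y A B} (hw : CsetP I d w) :
    Deriv (PhiCNF I d t) {PV.v j} w := by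
  obtain ⟨f₀, g₀, hcov⟩ := hfeas
  have hu : ∀ ℓ : Lab X Y A B, Deriv (PhiCNF I d t) {PV.v j} (PV.u ℓ) := by
    intro ℓ
    refine Deriv.step (clE_subset_phi (mem_clE'.2 ⟨j, hj, ℓ, rfl⟩)) rfl ?_
    intro z hz
    simp only [Finset.mem_singleton] at hz
    exact hz ▸ Deriv.base rfl
  obtain ⟨he, hua, hel⟩ := cover_derives (I := I) clA_subset_phi clB_subset_phi
    clC_subset_phi clD_subset_phi hcov (fun z a _ => hu _) (fun y b _ => hu _)
  match w, hw with
  | .u ℓ, _ => exact hu ℓ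
  | .e x y i, ⟨hE, hi⟩ => exact he x y i hE hi
  | .el x y b i, ⟨hE, hi⟩ => exact hel x y b i hE hi

end AuxDeriv
section AuxStructure

set_option linter.unusedSectionVars false

variable {X Y A B : Type*} [Fintype X] [Fintype Y] [Fintype A] [Fintype B]
  [DecidableEq X] [DecidableEq Y] [DecidableEq A] [DecidableEq B]
  {I : LabelCover X Y A B} {d t : ℕ} {Υ : Finset (Clause (PV X Y A B))}

/-- No clause of a representation of `h` has a `v`-variable as its head. -/
lemma pos_not_v (hrep : Represents Υ (hFun I d t)) {C : Clause (PV X Y A B)}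
    (hC : C ∈ Υ) (hcl : C.IsClause) (k : ℕ) : C.pos ≠ {PV.v k} := by
  intro hpos
  classical
  set a : PV X Y A B → Bool := fun w => if w = PV.v k then false else true with ha
  have haΦ : hFun I d t a := by
    intro C' hC'
    obtain ⟨w, hw, hcs⟩ := phi_head hC'
    refine Or.inl ⟨w, by simp [hw], ?_⟩
    have : w ≠ PV.v k := by rintro rfl; exact hcs
    simp [ha, this]
  have hev := (hrep a).2 haΦ C hC
  rcases hev with ⟨z, hz, haz⟩ | ⟨z, hz, haz⟩
  · rw [hpos, Finset.mem_singleton] at hz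
    subst hz
    simp [ha] at haz
  · have hzk : z = PV.v k := by
      by_contra h
      simp [ha, h] at haz
    subst hzk
    exact Finset.disjoint_left.1 hcl (hpos ▸ Finset.mem_singleton_self _) hz

/-- Structure of clauses of a prime representation whose body meets the `v`-variables. -/
lemma neg_v_structure (hfeas : ∃ f g, I.IsTotalCover f g)
    (hPH : IsPureHornCNF Υ)
    (hprime : ∀ C ∈ Υ, PrimeImplicate (hFun I d t) C)
    (hrep : Represents Υ (hFun I d t))
    {C : Clause (PV X Y A B)} (hC : C ∈ Υ) {k : ℕ} (hk : PV.v k ∈ C.neg) :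
    k ∈ Finset.Icc 1 t ∧ C.neg = {PV.v k} ∧ ∃ w, C.pos = {w} ∧ CsetP I d w := by
  classical
  obtain ⟨hcl, w, hpos⟩ := hPH C hC
  have himp := (hprime C hC).2.1
  have hwpos : w ∈ C.pos := hpos ▸ Finset.mem_singleton_self w
  have hwneg : w ∉ C.neg := fun h => Finset.disjoint_left.1 hcl hwpos h
  -- derivability of the head from the body
  have hderiv : Deriv (PhiCNF I d t) (↑C.neg) w := by
    set p : PV X Y A B → Prop := Deriv (PhiCNF I d t) (↑C.neg : Set _) with hp
    have hchi : hFun I d t (fun v => if p v then true else false) :=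
      evalCNF_chi (PhiCNF I d t) p
        (fun C' hC' => (phi_head hC').imp fun w h => h.1)
        (fun C' hC' w' hw' hall => Deriv.step hC' hw' hall)
    have hev : C.eval (fun v => if p v then true else false) := by
      by_contra hne
      exact himp _ hne hchi
    rcases hev with ⟨z, hz, haz⟩ | ⟨z, hz, haz⟩
    · rw [hpos, Finset.mem_singleton] at hz
      rw [hz] at haz
      by_cases hpw : p w
      · exact hpw
      · simp [hpw] at haz
    · have : p z := Deriv.base (by exact_mod_cast hz)
      simp [this] at haz
  have hwcs : CsetP I d w := (deriv_subset_cset hderiv).resolve_left hwneg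
  -- the index is in range
  have hkicc : k ∈ Finset.Icc 1 t := by
    by_contra hkn
    have hsplit : (↑C.neg : Set (PV X Y A B)) =
        ↑(C.neg.erase (PV.v k)) ∪ {PV.v k} := by
      ext z
      simp only [Finset.coe_erase, Set.union_singleton, Set.mem_insert_iff,
        Set.mem_diff, Finset.mem_coe, Set.mem_singleton_iff]
      constructor
      · intro hz
        by_cases hzk : z = PV.v k
        · exact Or.inl hzk
        · exact Or.inr ⟨hz, hzk⟩
      · rintro (rfl | ⟨hz, -⟩)
        · exact hk
        · exact hz
    have hderiv' : Deriv (PhiCNF I d t) (↑(C.neg.erase (PV.v k))) w := by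
      rcases deriv_drop_v hkn (hsplit ▸ hderiv) with rfl | h
      · exact absurd hwcs (by simp [CsetP])
      · exact h
    refine (hprime C hC).2.2.2 (PV.v k) hk ?_
    intro a hne ha
    rw [not_eval_iff] at hne
    have haw := satClosed ha (fun q hq => hne.2 q (by exact_mod_cast hq)) w hderiv'
    exact absurd haw (by simp [hne.1 w hwpos])
  -- the clause `v k → w` is an implicate
  have himp2 : Implicate (hFun I d t) ⟨{w}, {PV.v k}⟩ := by
    intro a hne ha
    rw [not_eval_iff] at hne
    have haw := satClosed ha
      (fun q hq => by
        have hq' : q = PV.v k := hq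
        rw [hq']
        exact hne.2 (PV.v k) (Finset.mem_singleton_self _))
      w (cset_deriv hfeas hkicc hwcs)
    exact absurd haw (by simp [hne.1 w (Finset.mem_singleton_self _)])
  -- the body is exactly `{v k}`
  refine ⟨hkicc, ?_, w, hpos, hwcs⟩
  refine Finset.eq_singleton_iff_unique_mem.2 ⟨hk, ?_⟩
  intro z hz
  by_contra hzk
  refine (hprime C hC).2.2.2 z hz ?_
  intro a hne ha
  rw [not_eval_iff] at hne
  refine himp2 a ?_ ha
  rw [not_eval_iff]
  constructor
  · intro q hq
    rw [Finset.mem_singleton] at hq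
    exact hq ▸ hne.1 w hwpos
  · intro q hq
    rw [Finset.mem_singleton] at hq
    subst hq
    exact hne.2 _ (Finset.mem_erase.2 ⟨fun h => hzk h.symm, hk⟩)

end AuxStructure
section AuxCore

set_option linter.unusedSectionVars false
set_option linter.unusedVariables false
set_option maxHeartbeats 1000000

variable {X Y A B : Type*} [Fintype X] [Fintype Y] [Fintype A] [Fintype B]
  [DecidableEq X] [DecidableEq Y] [DecidableEq A] [DecidableEq B]
  {I : LabelCover X Y A B} {d t : ℕ} {Υ : Finset (Clause (PV X Y A B))}

/-- The heads of the clauses of `Υ` whose body is exactly `{v j}`. -/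
def HDj (Υ : Finset (Clause (PV X Y A B))) (j : ℕ) : Finset (PV X Y A B) :=
  (Υ.filter fun C => C.neg = {PV.v j}).biUnion fun C => C.pos

lemma mem_HDj (hPH : IsPureHornCNF Υ) {w : PV X Y A B} {j : ℕ} :
    w ∈ HDj Υ j ↔ (⟨{w}, {PV.v j}⟩ : Clause (PV X Y A B)) ∈ Υ := by
  constructor
  · intro hw
    obtain ⟨C, hCf, hwC⟩ := Finset.mem_biUnion.1 hw
    obtain ⟨hCU, hneg⟩ := Finset.mem_filter.1 hCf
    obtain ⟨-, w', hpos⟩ := hPH C hCU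
    rw [hpos, Finset.mem_singleton] at hwC
    subst hwC
    have hCeq : C = ⟨{w}, {PV.v j}⟩ := by
      cases C
      simp only [Clause.mk.injEq]
      exact ⟨hpos, hneg⟩
    exact hCeq ▸ hCU
  · intro hw
    exact Finset.mem_biUnion.2 ⟨_, Finset.mem_filter.2 ⟨hw, rfl⟩, Finset.mem_singleton_self w⟩

lemma card_HDj (hPH : IsPureHornCNF Υ) (j : ℕ) :
    (HDj Υ j).card = (Υ.filter fun C => C.neg = {PV.v j}).card := by
  rw [HDj, Finset.card_biUnion]
  · refine (Finset.sum_congr rfl fun C hC => ?_).trans (Finset.card_eq_sum_ones _).symm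
    obtain ⟨-, w, hpos⟩ := hPH C (Finset.mem_filter.1 hC).1
    simp [hpos]
  · intro C₁ h₁ C₂ h₂ hne
    obtain ⟨-, w₁, hp₁⟩ := hPH C₁ (Finset.mem_filter.1 h₁).1
    obtain ⟨-, w₂, hp₂⟩ := hPH C₂ (Finset.mem_filter.1 h₂).1
    simp only [Function.onFun]
    rw [hp₁, hp₂, Finset.disjoint_singleton]
    rintro rfl
    refine hne ?_
    have e₁ : C₁ = ⟨{w₁}, {PV.v j}⟩ := by
      cases C₁
      simp only [Clause.mk.injEq]
      exact ⟨hp₁, (Finset.mem_filter.1 h₁).2⟩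
    have e₂ : C₂ = ⟨{w₁}, {PV.v j}⟩ := by
      cases C₂
      simp only [Clause.mk.injEq]
      exact ⟨hp₂, (Finset.mem_filter.1 h₂).2⟩
    rw [e₁, e₂]

/-- The core lemma: if some index `i* ∈ [d]` is avoided by all heads of the
`v j`-clauses of `Υ`, then the labels read off from those clauses cover every edge. -/
lemma core_good (hfeas : ∃ f g, I.IsTotalCover f g)
    (hnoIsoY : ∀ y : Y, ∃ x, (x, y) ∈ I.E)
    (hPH : IsPureHornCNF Υ)
    (hprime : ∀ C ∈ Υ, PrimeImplicate (hFun I d t) C)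
    (hrep : Represents Υ (hFun I d t))
    {j : ℕ} (hj : j ∈ Finset.Icc 1 t)
    {istar : ℕ} (histar : istar ∈ Finset.Icc 1 d)
    (havoid : ∀ w ∈ HDj Υ j, ∀ x y i,
      (w = PV.e x y i ∨ ∃ b, w = PV.el x y b i) → i ≠ istar) :
    ∀ y : Y, ∃ b, (⟨{PV.u (Sum.inr (y, b))}, {PV.v j}⟩ : Clause (PV X Y A B)) ∈ Υ ∧
      ∀ z, (z, y) ∈ I.E → ∃ a,
        (⟨{PV.u (Sum.inl (z, a))}, {PV.v j}⟩ : Clause (PV X Y A B)) ∈ Υ ∧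
        (a, b) ∈ I.cst (z, y) := by
  classical
  by_contra hbad
  push_neg at hbad
  obtain ⟨yh, hng⟩ := hbad
  obtain ⟨xh, hxh⟩ := hnoIsoY yh
  set Ψ' : Finset (Clause (PV X Y A B)) := clA I d ∪ clB I d ∪ clC I d with hΨ'
  set P : PV X Y A B → Prop := Deriv Ψ' (↑(HDj Υ j)) with hP
  have hΨ'sub : Ψ' ⊆ PhiCNF I d t := by
    rw [hΨ']
    exact Finset.union_subset (Finset.union_subset clA_subset_phi clB_subset_phi) clC_subset_phi
  -- the invariant
  have hInv : ∀ w, P w →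
      (∀ ℓ, w = PV.u ℓ → (⟨{PV.u ℓ}, {PV.v j}⟩ : Clause (PV X Y A B)) ∈ Υ) ∧
      (∀ x, w ≠ PV.e x yh istar) ∧
      (∀ z b, w = PV.el z yh b istar →
        ((⟨{PV.u (Sum.inr (yh, b))}, {PV.v j}⟩ : Clause (PV X Y A B)) ∈ Υ ∧
          ∃ a, (⟨{PV.u (Sum.inl (z, a))}, {PV.v j}⟩ : Clause (PV X Y A B)) ∈ Υ ∧
            (a, b) ∈ I.cst (z, yh))) ∧
      (∀ k, w ≠ PV.v k) := by
    intro w hw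
    induction hw with
    | @base v hv =>
      have hv' : v ∈ HDj Υ j := hv
      refine ⟨?_, ?_, ?_, ?_⟩
      · rintro ℓ rfl
        exact (mem_HDj hPH).1 hv'
      · rintro x rfl
        exact havoid _ hv' x yh istar (Or.inl rfl) rfl
      · rintro z b rfl
        exact absurd rfl (havoid _ hv' z yh istar (Or.inr ⟨b, rfl⟩))
      · rintro k rfl
        have hk := (mem_HDj hPH).1 hv'
        exact pos_not_v hrep hk (hPH _ hk).1 k rfl
    | @step C v hC hpos hneg ih =>
      rcases Finset.mem_union.1 hC with hC' | hC'
      · rcases Finset.mem_union.1 hC' with hC'' | hC''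
        · -- clause (a)
          obtain ⟨x, y, a, b, i, hE, hab, hi, heq⟩ := mem_clA'.1 hC''
          subst heq
          have hv : v = PV.el x y b i := (Finset.singleton_inj.1 hpos).symm
          subst hv
          refine ⟨by simp, by simp, ?_, by simp⟩
          rintro z b' heq
          injection heq with h1 h2 h3 h4
          subst h1; subst h3
          obtain rfl := h2.symm
          obtain rfl := h4.symm
          exact ⟨(ih (PV.u (Sum.inr (yh, b))) (by simp)).1 _ rfl, a,
            (ih (PV.u (Sum.inl (x, a))) (by simp)).1 _ rfl, hab⟩
        · -- clause (b)
          obtain ⟨x, y, b, i, hE, hi, heq⟩ := mem_clB'.1 hC''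
          subst heq
          have hv : v = PV.e x y i := (Finset.singleton_inj.1 hpos).symm
          subst hv
          refine ⟨by simp, ?_, by simp, by simp⟩
          rintro x' heq
          injection heq with h1 h2 h3
          obtain rfl := h2.symm
          obtain rfl := h3.symm
          have hx : x ∈ Nbr I yh := mem_Nbr.2 hE
          obtain ⟨hbΥ, -⟩ :=
            (ih (PV.el x yh b istar) (Finset.mem_image.2 ⟨x, hx, rfl⟩)).2.2.1 x b rfl
          obtain ⟨z, hzE, hza⟩ := hng b hbΥ
          obtain ⟨-, a, haΥ, habz⟩ :=
            (ih (PV.el z yh b istar)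
              (Finset.mem_image.2 ⟨z, mem_Nbr.2 hzE, rfl⟩)).2.2.1 z b rfl
          exact hza a haΥ habz
      · -- clause (c)
        obtain ⟨x, y, b, i, hE, hi, heq⟩ := mem_clC'.1 hC'
        subst heq
        have hv : v = PV.el x y b i := (Finset.singleton_inj.1 hpos).symm
        subst hv
        refine ⟨by simp, by simp, ?_, by simp⟩
        rintro z b' heq
        injection heq with h1 h2 h3 h4
        obtain rfl := h2.symm
        obtain rfl := h4.symm
        exact absurd rfl ((ih (PV.e x yh istar) (by simp)).2.1 x)
  have hkey : ¬ P (PV.e xh yh istar) := fun h => (hInv _ h).2.1 xh rfl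
  have hPv : ∀ k, ¬ P (PV.v k) := fun k h => (hInv _ h).2.2.2 k rfl
  -- the characteristic assignment of the closure satisfies `Φ`
  set chi : PV X Y A B → Bool := fun w => if P w then true else false with hchi
  have hchiPhi : hFun I d t chi := by
    intro C hC
    rcases Finset.mem_union.1 hC with hC' | hC'
    · rcases Finset.mem_union.1 hC' with hC'' | hC''
      · -- clauses (a), (b), (c)
        have hmem : C ∈ Ψ' := by
          rw [hΨ']
          rcases Finset.mem_union.1 hC'' with h | h
          · exact Finset.mem_union.2 (Or.inl h)
          · exact Finset.mem_union.2 (Or.inr h)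
        exact evalCNF_chi Ψ' P
          (fun C' hC' => (phi_head (hΨ'sub hC')).imp fun w h => h.1)
          (fun C' hC' w' hw' hall => Deriv.step hC' hw' hall) C hmem
      · -- clause (d)
        obtain ⟨ℓ, rfl⟩ := mem_clD'.1 hC''
        refine Or.inr ⟨PV.e xh yh istar, ?_, by simp [hchi, hkey]⟩
        exact mem_bigBody'.2 ⟨xh, yh, istar, hxh, histar, rfl⟩
    · -- clause (e)
      obtain ⟨k, hk, ℓ, rfl⟩ := mem_clE'.1 hC'
      exact Or.inr ⟨PV.v k, by simp, by simp [hchi, hPv k]⟩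
  have hchiΥ : evalCNF Υ chi := (hrep chi).2 hchiPhi
  -- the assignment with additionally `v j ↦ true` satisfies `Υ`
  set afull : PV X Y A B → Bool := fun w => if w = PV.v j then true else chi w with hafull
  have haΥ : evalCNF Υ afull := by
    intro C hCU
    by_cases hv : ∃ k, PV.v k ∈ C.neg
    · obtain ⟨k, hkneg⟩ := hv
      obtain ⟨hkicc, hneg, w, hpos, hwcs⟩ :=
        neg_v_structure hfeas hPH hprime hrep hCU hkneg
      by_cases hkj : k = j
      · subst hkj
        have hCeq : (⟨{w}, {PV.v k}⟩ : Clause (PV X Y A B)) ∈ Υ := by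
          have : C = ⟨{w}, {PV.v k}⟩ := by
            cases C
            simp only [Clause.mk.injEq]
            exact ⟨hpos, hneg⟩
          exact this ▸ hCU
        have hPw : P w := Deriv.base (by exact_mod_cast (mem_HDj hPH).2 hCeq)
        refine Or.inl ⟨w, hpos ▸ Finset.mem_singleton_self w, ?_⟩
        by_cases hw : w = PV.v k <;> simp [hafull, hw, hchi, hPw]
      · refine Or.inr ⟨PV.v k, hkneg, ?_⟩
        have hne : (PV.v k : PV X Y A B) ≠ PV.v j := by simp [hkj]
        simp [hafull, hne, hchi, hPv k]
    · push_neg at hv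
      have hCc := hchiΥ C hCU
      refine (eval_congr ?_).2 hCc
      intro w hw
      rcases hw with hw | hw
      · obtain ⟨-, w', hpos⟩ := hPH C hCU
        rw [hpos, Finset.mem_singleton] at hw
        obtain rfl := hw.symm
        have hne : w' ≠ PV.v j := by
          rintro rfl
          exact pos_not_v hrep hCU (hPH C hCU).1 j hpos
        simp [hafull, hne]
      · have : w ≠ PV.v j := fun h => hv j (h ▸ hw)
        simp [hafull, this]
  have haΦ : evalCNF (PhiCNF I d t) afull := (hrep afull).1 haΥ
  -- now fire the (e), (a), (b) clauses to reach the forbidden variable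
  have hvtrue : afull (PV.v j) = true := by simp [hafull]
  have hPu : ∀ ℓ : Lab X Y A B, P (PV.u ℓ) := by
    intro ℓ
    have hcl := haΦ _ (clE_subset_phi (t := t) (I := I) (d := d) (mem_clE'.2 ⟨j, hj, ℓ, rfl⟩))
    rcases hcl with ⟨z, hz, haz⟩ | ⟨z, hz, haz⟩
    · rw [Finset.mem_singleton] at hz
      subst hz
      by_cases hp : P (PV.u ℓ)
      · exact hp
      · simp [hafull, hchi, hp] at haz
    · rw [Finset.mem_singleton] at hz
      subst hz
      rw [hvtrue] at haz
      exact absurd haz (by simp)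
  obtain ⟨f₀, g₀, hcov⟩ := hfeas
  obtain ⟨b₀, hb₀⟩ := hcov.1 yh
  have hel : ∀ z, (z, yh) ∈ I.E → P (PV.el z yh b₀ istar) := by
    intro z hzE
    obtain ⟨a, ha, hab⟩ := hcov.2 (z, yh) hzE b₀ hb₀
    have hcl := haΦ _ (clA_subset_phi (t := t)
      (mem_clA'.2 ⟨z, yh, a, b₀, istar, hzE, hab, histar, rfl⟩))
    rcases hcl with ⟨w, hw, haw⟩ | ⟨w, hw, haw⟩
    · rw [Finset.mem_singleton] at hw
      subst hw
      by_cases hp : P (PV.el z yh b₀ istar)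
      · exact hp
      · simp [hafull, hchi, hp] at haw
    · exfalso
      simp only [Finset.mem_insert, Finset.mem_singleton] at hw
      rcases hw with rfl | rfl <;>
        simp [hafull, hchi, hPu] at haw
  have hcl := haΦ _ (clB_subset_phi (t := t)
    (mem_clB'.2 ⟨xh, yh, b₀, istar, hxh, histar, rfl⟩))
  rcases hcl with ⟨w, hw, haw⟩ | ⟨w, hw, haw⟩
  · rw [Finset.mem_singleton] at hw
    subst hw
    refine hkey ?_
    by_cases hp : P (PV.e xh yh istar)
    · exact hp
    · simp [hafull, hchi, hp] at haw
  · obtain ⟨z, hz, rfl⟩ := Finset.mem_image.1 hw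
    have := hel z (mem_Nbr.1 hz)
    simp [hafull, hchi, this] at haw

end AuxCore
section AuxCount

set_option linter.unusedSectionVars false
set_option linter.unusedVariables false

lemma card_filter_prod {α β : Type*} [Fintype α] [Fintype β] [DecidableEq α] [DecidableEq β]
    (q : α × β → Prop) [DecidablePred q] :
    (Finset.univ.filter q).card = ∑ x : α, (Finset.univ.filter fun b => q (x, b)).card := by
  classical
  rw [Finset.card_eq_sum_card_fiberwise
    (f := Prod.fst) (t := Finset.univ) (fun x _ => Finset.mem_univ _)]
  refine Finset.sum_congr rfl fun x _ => ?_
  have himg : ((Finset.univ.filter q).filter fun p => p.1 = x) =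
      (Finset.univ.filter fun b => q (x, b)).image fun b => (x, b) := by
    ext ⟨p1, p2⟩
    simp only [Finset.mem_filter, Finset.mem_univ, true_and, Finset.mem_image]
    constructor
    · rintro ⟨hq, rfl⟩
      exact ⟨p2, hq, rfl⟩
    · rintro ⟨b, hq, heq⟩
      injection heq with h1 h2
      subst h1; subst h2
      exact ⟨hq, rfl⟩
  rw [himg, Finset.card_image_of_injective _ fun b1 b2 h => (Prod.ext_iff.1 h).2]

lemma card_filter_sum {α β : Type*} [Fintype α] [Fintype β] [DecidableEq α] [DecidableEq β]
    (q : α ⊕ β → Prop) [DecidablePred q] :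
    (Finset.univ.filter q).card =
      (Finset.univ.filter fun a => q (.inl a)).card +
      (Finset.univ.filter fun b => q (.inr b)).card := by
  classical
  have h : (Finset.univ.filter q) =
      ((Finset.univ.filter fun a => q (.inl a)).image Sum.inl) ∪
      ((Finset.univ.filter fun b => q (.inr b)).image Sum.inr) := by
    ext w
    rcases w with a | b <;> simp
  rw [h, Finset.card_union_of_disjoint, Finset.card_image_of_injective _ Sum.inl_injective,
    Finset.card_image_of_injective _ Sum.inr_injective]
  refine Finset.disjoint_left.2 fun w hw1 hw2 => ?_
  obtain ⟨a, -, rfl⟩ := Finset.mem_image.1 hw1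
  obtain ⟨b, -, hb⟩ := Finset.mem_image.1 hw2
  exact nomatch hb

end AuxCount

section AuxUpper

set_option linter.unusedSectionVars false
set_option linter.unusedVariables false
set_option maxHeartbeats 1000000

variable {X Y A B : Type*} [Fintype X] [Fintype Y] [Fintype A] [Fintype B]
  [DecidableEq X] [DecidableEq Y] [DecidableEq A] [DecidableEq B]

/-- The possible "bad" bodies `{v j}`, `j ∈ [t]`. -/
def badNegs (X Y A B : Type*) [DecidableEq X] [DecidableEq Y] [DecidableEq A] [DecidableEq B]
    (t : ℕ) : Finset (Finset (PV X Y A B)) :=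
  (Finset.Icc 1 t).image fun j => {PV.v j}

/-- The clauses of `Υ` whose body is not some `{v j}`, `j ∈ [t]`. -/
def Ups0 (Υ : Finset (Clause (PV X Y A B))) (t : ℕ) : Finset (Clause (PV X Y A B)) :=
  Υ.filter fun C => C.neg ∉ badNegs X Y A B t

lemma mem_Ups0 {Υ : Finset (Clause (PV X Y A B))} {t : ℕ} {C : Clause (PV X Y A B)} :
    C ∈ Ups0 Υ t ↔ C ∈ Υ ∧ ∀ j ∈ Finset.Icc 1 t, C.neg ≠ {PV.v j} := by
  rw [Ups0, Finset.mem_filter]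
  refine and_congr_right fun _ => ?_
  rw [badNegs]
  constructor
  · intro h j hj hne
    exact h (Finset.mem_image.2 ⟨j, hj, hne.symm⟩)
  · intro h hmem
    obtain ⟨j, hj, hne⟩ := Finset.mem_image.1 hmem
    exact h j hj hne.symm

lemma card_split (Υ : Finset (Clause (PV X Y A B))) (t : ℕ) :
    Υ.card = (Ups0 Υ t).card
      + ∑ j ∈ Finset.Icc 1 t, (Υ.filter fun C => C.neg = {PV.v j}).card := by
  rw [Ups0, ← Finset.card_filter_add_card_filter_not
    (p := fun C => C.neg ∉ badNegs X Y A B t)]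
  congr 1
  have h : Υ.filter (fun C => ¬ C.neg ∉ badNegs X Y A B t) =
      (Finset.Icc 1 t).biUnion fun j => Υ.filter fun C => C.neg = {PV.v j} := by
    ext C
    simp only [Finset.mem_filter, Finset.mem_biUnion, not_not, badNegs, Finset.mem_image]
    constructor
    · rintro ⟨hC, j, hj, hej⟩
      exact ⟨j, hj, hC, hej.symm⟩
    · rintro ⟨j, hj, hC, hej⟩
      exact ⟨hC, j, hj, hej.symm⟩
  rw [h, Finset.card_biUnion]
  intro j1 h1 j2 h2 hne
  refine Finset.disjoint_left.2 fun C hC1 hC2 => hne ?_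
  have e1 := (Finset.mem_filter.1 hC1).2
  have e2 := (Finset.mem_filter.1 hC2).2
  have := Finset.singleton_inj.1 (e1.symm.trans e2)
  injection this

variable {I : LabelCover X Y A B} {d t : ℕ} {Υ : Finset (Clause (PV X Y A B))}

lemma clA_subset_psi : clA I d ⊆ PsiCNF I d := fun _ h =>
  Finset.mem_union.2 (Or.inl (Finset.mem_union.2 (Or.inl (Finset.mem_union.2 (Or.inl h)))))
lemma clB_subset_psi : clB I d ⊆ PsiCNF I d := fun _ h =>
  Finset.mem_union.2 (Or.inl (Finset.mem_union.2 (Or.inl (Finset.mem_union.2 (Or.inr h)))))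
lemma clC_subset_psi : clC I d ⊆ PsiCNF I d := fun _ h =>
  Finset.mem_union.2 (Or.inl (Finset.mem_union.2 (Or.inr h)))
lemma clD_subset_psi : clD I d ⊆ PsiCNF I d := fun _ h => Finset.mem_union.2 (Or.inr h)
lemma psi_subset_phi : PsiCNF I d ⊆ PhiCNF I d t := fun _ h => Finset.mem_union.2 (Or.inl h)

/-- No variable of a clause of `Ψ` is a `v`-variable. -/
lemma psi_vars_not_v {C : Clause (PV X Y A B)} (hC : C ∈ PsiCNF I d) :
    ∀ w, (w ∈ C.pos ∨ w ∈ C.neg) → ∀ k, w ≠ PV.v k := by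
  intro w hw k
  rcases Finset.mem_union.1 hC with hC' | hC'
  · rcases Finset.mem_union.1 hC' with hC'' | hC''
    · rcases Finset.mem_union.1 hC'' with h | h
      · obtain ⟨x, y, a, b, i, -, -, -, rfl⟩ := mem_clA'.1 h
        rcases hw with hw | hw <;> simp only [Finset.mem_singleton,
          Finset.mem_insert] at hw <;> rintro rfl <;> simp at hw
      · obtain ⟨x, y, b, i, -, -, rfl⟩ := mem_clB'.1 h
        rcases hw with hw | hw
        · simp only [Finset.mem_singleton] at hw
          rintro rfl; simp at hw
        · obtain ⟨z, -, hz⟩ := Finset.mem_image.1 hw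
          rintro rfl; exact nomatch hz
    · obtain ⟨x, y, b, i, -, -, rfl⟩ := mem_clC'.1 hC''
      rcases hw with hw | hw <;> simp only [Finset.mem_singleton] at hw <;>
        rintro rfl <;> simp at hw
  · obtain ⟨ℓ, rfl⟩ := mem_clD'.1 hC'
    rcases hw with hw | hw
    · simp only [Finset.mem_singleton] at hw
      rintro rfl; simp at hw
    · obtain ⟨x, y, i, -, -, hz⟩ := mem_bigBody'.1 hw
      rintro rfl; exact nomatch hz

/-- The replacement clauses: `v j → u ℓ` for all `j ∈ [t]` and cover labels `ℓ`. -/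
def Enew (t : ℕ) (fs : X → Finset A) (gs : Y → Finset B) : Finset (Clause (PV X Y A B)) :=
  (Finset.Icc 1 t).biUnion fun j =>
    ((Finset.univ : Finset X).biUnion fun x => (fs x).image fun a =>
      (⟨{PV.u (Sum.inl (x, a))}, {PV.v j}⟩ : Clause (PV X Y A B))) ∪
    ((Finset.univ : Finset Y).biUnion fun y => (gs y).image fun b =>
      (⟨{PV.u (Sum.inr (y, b))}, {PV.v j}⟩ : Clause (PV X Y A B)))

lemma mem_Enew {fs : X → Finset A} {gs : Y → Finset B} {C : Clause (PV X Y A B)} :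
    C ∈ Enew t fs gs ↔ ∃ j ∈ Finset.Icc 1 t,
      (∃ x a, a ∈ fs x ∧ C = ⟨{PV.u (Sum.inl (x, a))}, {PV.v j}⟩) ∨
      (∃ y b, b ∈ gs y ∧ C = ⟨{PV.u (Sum.inr (y, b))}, {PV.v j}⟩) := by
  simp only [Enew, Finset.mem_biUnion, Finset.mem_union, Finset.mem_image, Finset.mem_univ]
  constructor
  · rintro ⟨j, hj, ⟨x, -, a, ha, rfl⟩ | ⟨y, -, b, hb, rfl⟩⟩
    · exact ⟨j, hj, Or.inl ⟨x, a, ha, rfl⟩⟩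
    · exact ⟨j, hj, Or.inr ⟨y, b, hb, rfl⟩⟩
  · rintro ⟨j, hj, ⟨x, a, ha, rfl⟩ | ⟨y, b, hb, rfl⟩⟩
    · exact ⟨j, hj, Or.inl ⟨x, trivial, a, ha, rfl⟩⟩
    · exact ⟨j, hj, Or.inr ⟨y, trivial, b, hb, rfl⟩⟩

lemma card_Enew_le {fs : X → Finset A} {gs : Y → Finset B} :
    (Enew (X := X) (Y := Y) (A := A) (B := B) t fs gs).card ≤
      t * (∑ x, (fs x).card + ∑ y, (gs y).card) := by
  refine (Finset.card_biUnion_le).trans ?_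
  have hbound : ∀ j ∈ Finset.Icc 1 t,
      (((Finset.univ : Finset X).biUnion fun x => (fs x).image fun a =>
        (⟨{PV.u (Sum.inl (x, a))}, {PV.v j}⟩ : Clause (PV X Y A B))) ∪
      ((Finset.univ : Finset Y).biUnion fun y => (gs y).image fun b =>
        (⟨{PV.u (Sum.inr (y, b))}, {PV.v j}⟩ : Clause (PV X Y A B)))).card ≤
      ∑ x, (fs x).card + ∑ y, (gs y).card := by
    intro j hj
    refine le_trans (Finset.card_union_le _ _) (Nat.add_le_add ?_ ?_)
    · refine Finset.card_biUnion_le.trans ?_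
      exact Finset.sum_le_sum fun x _ => Finset.card_image_le
    · refine Finset.card_biUnion_le.trans ?_
      exact Finset.sum_le_sum fun y _ => Finset.card_image_le
  refine (Finset.sum_le_sum hbound).trans ?_
  rw [Finset.sum_const, Nat.card_Icc]
  simp [Nat.smul_one_eq_cast]

/-- The replaced CNF is pure Horn and still represents `h`. -/
lemma replaced_represents
    (hfeas : ∃ f g, I.IsTotalCover f g)
    (hPH : IsPureHornCNF Υ)
    (hprime : ∀ C ∈ Υ, PrimeImplicate (hFun I d t) C)
    (hrep : Represents Υ (hFun I d t))
    {fs : X → Finset A} {gs : Y → Finset B} (hcov : I.IsTotalCover fs gs) :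
    IsPureHornCNF (Ups0 Υ t ∪ Enew t fs gs) ∧
    Represents (Ups0 Υ t ∪ Enew t fs gs) (hFun I d t) := by
  classical
  have hU0sub : Ups0 Υ t ⊆ Υ := fun C hC => (mem_Ups0.1 hC).1
  constructor
  · intro C hC
    rcases Finset.mem_union.1 hC with hC' | hC'
    · exact hPH C (hU0sub hC')
    · obtain ⟨j, hj, ⟨x, a, ha, rfl⟩ | ⟨y, b, hb, rfl⟩⟩ := mem_Enew.1 hC' <;>
        exact ⟨by simp [Clause.IsClause], _, rfl⟩
  · intro a
    constructor
    · -- Υ' ⊨ sufficient for h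
      intro ha
      -- first: a₀ (v-variables set to false) satisfies Υ, hence Φ
      set a₀ : PV X Y A B → Bool := fun w =>
        match w with
        | PV.v _ => false
        | w => a w with ha₀def
      have ha₀v : ∀ k, a₀ (PV.v k) = false := fun k => rfl
      have ha₀other : ∀ w, (∀ k, w ≠ PV.v k) → a₀ w = a w := by
        intro w hw
        match w with
        | PV.u ℓ => rfl
        | PV.e x y i => rfl
        | PV.el x y b i => rfl
        | PV.v k => exact absurd rfl (hw k)
      have ha₀Υ : evalCNF Υ a₀ := by
        intro C hCU
        by_cases hvneg : ∃ k, PV.v k ∈ C.neg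
        · obtain ⟨k, hk⟩ := hvneg
          exact Or.inr ⟨PV.v k, hk, ha₀v k⟩
        · push_neg at hvneg
          have hC0 : C ∈ Ups0 Υ t := by
            refine mem_Ups0.2 ⟨hCU, fun j hj hne => ?_⟩
            exact hvneg j (hne ▸ Finset.mem_singleton_self _)
          have hCa := ha C (Finset.mem_union.2 (Or.inl hC0))
          refine (eval_congr ?_).2 hCa
          intro w hw
          refine ha₀other w ?_
          rcases hw with hw | hw
          · obtain ⟨-, w', hpos⟩ := hPH C hCU
            rw [hpos, Finset.mem_singleton] at hw
            obtain rfl := hw.symm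
            intro k
            rintro rfl
            exact pos_not_v hrep hCU (hPH C hCU).1 k hpos
          · intro k
            rintro rfl
            exact hvneg k hw
      have ha₀Φ : evalCNF (PhiCNF I d t) a₀ := (hrep a₀).1 ha₀Υ
      -- hence a satisfies Ψ
      have haΨ : evalCNF (PsiCNF I d) a := by
        intro C hCΨ
        have h0 := ha₀Φ C (psi_subset_phi hCΨ)
        refine (eval_congr ?_).2 h0
        intro w hw
        exact (ha₀other w (psi_vars_not_v hCΨ w hw)).symm
      -- now all of Φ
      intro C hCΦ
      rcases Finset.mem_union.1 hCΦ with hCΨ | hCE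
      · exact haΨ C hCΨ
      · obtain ⟨j, hj, ℓ, rfl⟩ := mem_clE'.1 hCE
        by_cases hvj : a (PV.v j) = true
        · -- all cover `u`-variables are true, so forward chain in Ψ
          refine Or.inl ⟨PV.u ℓ, Finset.mem_singleton_self _, ?_⟩
          set QS : Set (PV X Y A B) :=
            {w | (∃ x a', a' ∈ fs x ∧ w = PV.u (Sum.inl (x, a'))) ∨
                 (∃ y b', b' ∈ gs y ∧ w = PV.u (Sum.inr (y, b')))} with hQS
          have hQtrue : ∀ q ∈ QS, a q = true := by
            rintro q (⟨x, a', ha', rfl⟩ | ⟨y, b', hb', rfl⟩)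
            · have hcl := ha _ (Finset.mem_union.2 (Or.inr
                (mem_Enew.2 ⟨j, hj, Or.inl ⟨x, a', ha', rfl⟩⟩)))
              rcases hcl with ⟨w, hw, haw⟩ | ⟨w, hw, haw⟩
              · rw [Finset.mem_singleton] at hw
                exact hw ▸ haw
              · rw [Finset.mem_singleton] at hw
                rw [hw, hvj] at haw
                exact absurd haw (by simp)
            · have hcl := ha _ (Finset.mem_union.2 (Or.inr
                (mem_Enew.2 ⟨j, hj, Or.inr ⟨y, b', hb', rfl⟩⟩)))
              rcases hcl with ⟨w, hw, haw⟩ | ⟨w, hw, haw⟩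
              · rw [Finset.mem_singleton] at hw
                exact hw ▸ haw
              · rw [Finset.mem_singleton] at hw
                rw [hw, hvj] at haw
                exact absurd haw (by simp)
          have hder := cover_derives (Φ₀ := PsiCNF I d) (Q := QS)
            clA_subset_psi clB_subset_psi clC_subset_psi clD_subset_psi hcov
            (fun z a' ha' => Deriv.base (Or.inl ⟨z, a', ha', rfl⟩))
            (fun y b' hb' => Deriv.base (Or.inr ⟨y, b', hb', rfl⟩))
          exact satClosed haΨ hQtrue _ (hder.2.1 ℓ)
        · exact Or.inr ⟨PV.v j, Finset.mem_singleton_self _, by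
            simp [Bool.not_eq_true] at hvj
            exact hvj⟩
    · -- h sufficient for Υ'
      intro ha C hC
      rcases Finset.mem_union.1 hC with hC' | hC'
      · by_contra hne
        exact (hprime C (hU0sub hC')).2.1 a hne ha
      · obtain ⟨j, hj, hform⟩ := mem_Enew.1 hC'
        have : ∃ ℓ : Lab X Y A B, C = ⟨{PV.u ℓ}, {PV.v j}⟩ := by
          rcases hform with ⟨x, a', -, rfl⟩ | ⟨y, b', -, rfl⟩
          · exact ⟨_, rfl⟩
          · exact ⟨_, rfl⟩
        obtain ⟨ℓ, rfl⟩ := this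
        by_contra hne
        rw [not_eval_iff] at hne
        have := satClosed ha
          (fun q hq => by
            have hq' : q = PV.v j := hq
            rw [hq']
            exact hne.2 _ (Finset.mem_singleton_self _))
          _ (cset_deriv hfeas hj (w := PV.u ℓ) trivial)
        exact absurd this (by simp [hne.1 _ (Finset.mem_singleton_self _)])

end AuxUpper

/-- With `d = 1 + rλ + sλ′`, if `Υ` is a clause minimum prime pure
Horn CNF representation of the canonical function `h`, then for every `j ∈ [t]` the
labeling `f_j` extracted from `Υ` is a tight total-cover of the (refined) Label Cover
instance of minimum cost: `κ(f_j) = κ(L)`. -/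
theorem fj_is_optimal_tight_totalCover
    {X Y A B : Type*} [Fintype X] [Fintype Y] [Fintype A] [Fintype B]
    [DecidableEq X] [DecidableEq Y] [DecidableEq A] [DecidableEq B]
    [Nonempty X] [Nonempty Y]
    (I : LabelCover X Y A B) (d t : ℕ) (ht : 1 ≤ t)
    (hd : d = 1 + Fintype.card X * Fintype.card A + Fintype.card Y * Fintype.card B)
    (hnoIsoX : ∀ x : X, ∃ y, (x, y) ∈ I.E)
    (hnoIsoY : ∀ y : Y, ∃ x, (x, y) ∈ I.E)
    (hfeas : ∃ f g, I.IsTotalCover f g)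
    (Υ : Finset (Clause (PV X Y A B)))
    (hPH : IsPureHornCNF Υ)
    (hprime : ∀ C ∈ Υ, PrimeImplicate (hFun I d t) C)
    (hrep : Represents Υ (hFun I d t))
    (hmin : ∀ Υ' : Finset (Clause (PV X Y A B)), IsPureHornCNF Υ' →
      Represents Υ' (hFun I d t) → Υ.card ≤ Υ'.card) :
    ∀ j ∈ Finset.Icc 1 t,
      I.IsTotalCover (fjX Υ j) (fjY Υ j) ∧ LabelCover.Tight (fjY Υ j) ∧
      ∀ (f' : X → Finset A) (g' : Y → Finset B),
        I.IsTotalCover f' g' → lcCost (fjX Υ j) ≤ lcCost f' := by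
  classical
  -- minimum cover cost
  set TC : Finset ((X → Finset A) × (Y → Finset B)) :=
    Finset.univ.filter (fun p => I.IsTotalCover p.1 p.2) with hTC
  have hTCne : TC.Nonempty := by
    obtain ⟨f₀, g₀, hcov⟩ := hfeas
    exact ⟨(f₀, g₀), Finset.mem_filter.2 ⟨Finset.mem_univ _, hcov⟩⟩
  set cand : Finset ℕ := TC.image fun p => ∑ x, (p.1 x).card with hcand
  have hcandne : cand.Nonempty := hTCne.image _
  set mincost : ℕ := cand.min' hcandne with hmincost
  have hminle : ∀ (f' : X → Finset A) (g' : Y → Finset B),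
      I.IsTotalCover f' g' → mincost ≤ ∑ x, (f' x).card := by
    intro f' g' hcov'
    exact cand.min'_le _ (Finset.mem_image.2
      ⟨(f', g'), Finset.mem_filter.2 ⟨Finset.mem_univ _, hcov'⟩, rfl⟩)
  -- a minimizing, tight total cover
  obtain ⟨pv, hpv, hpveq⟩ := Finset.mem_image.1 (cand.min'_mem hcandne)
  have hpstar : I.IsTotalCover pv.1 pv.2 := (Finset.mem_filter.1 hpv).2
  set gs : Y → Finset B := fun y => {(hpstar.1 y).choose} with hgs
  have hgsmem : ∀ y, (hpstar.1 y).choose ∈ pv.2 y := fun y => (hpstar.1 y).choose_spec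
  have hcovstar : I.IsTotalCover pv.1 gs := by
    refine ⟨fun y => Finset.singleton_nonempty _, fun e he b hb => ?_⟩
    rw [hgs, Finset.mem_singleton] at hb
    subst hb
    exact hpstar.2 e he _ (hgsmem e.2)
  have hsumgs : ∑ y, (gs y).card = Fintype.card Y := by
    simp [hgs]
  -- upper bound on the number of `v`-clauses
  obtain ⟨hPH', hrep'⟩ := replaced_represents hfeas hPH hprime hrep hcovstar
  have hup : Υ.card ≤ (Ups0 Υ t ∪ Enew t pv.1 gs).card := hmin _ hPH' hrep'
  have hcard : Υ.card = (Ups0 Υ t).card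
      + ∑ j ∈ Finset.Icc 1 t, (Υ.filter fun C => C.neg = {PV.v j}).card := card_split Υ t
  have hsum_le : ∑ j ∈ Finset.Icc 1 t, (HDj Υ j).card ≤ t * (mincost + Fintype.card Y) := by
    have h1 : (Ups0 Υ t ∪ Enew t pv.1 gs).card ≤ (Ups0 Υ t).card + (Enew t pv.1 gs).card :=
      Finset.card_union_le _ _
    have h2 : (Enew (X := X) (Y := Y) (A := A) (B := B) t pv.1 gs).card ≤
        t * (mincost + Fintype.card Y) := by
      refine le_trans card_Enew_le ?_
      rw [hpveq, hsumgs]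
    have h3 : ∑ j ∈ Finset.Icc 1 t, (HDj Υ j).card
        = ∑ j ∈ Finset.Icc 1 t, (Υ.filter fun C => C.neg = {PV.v j}).card :=
      Finset.sum_congr rfl fun j _ => card_HDj hPH j
    omega
  -- basic numerology
  have hfullcov : mincost ≤ Fintype.card X * Fintype.card A := by
    obtain ⟨f₀, g₀, hcov⟩ := hfeas
    have : I.IsTotalCover (fun _ => (Finset.univ : Finset A)) g₀ := by
      refine ⟨hcov.1, fun e he b hb => ?_⟩
      obtain ⟨a, -, hab⟩ := hcov.2 e he b hb
      exact ⟨a, Finset.mem_univ _, hab⟩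
    refine le_trans (hminle _ _ this) ?_
    simp [mul_comm]
  have hBpos : 1 ≤ Fintype.card B := by
    obtain ⟨f₀, g₀, hcov⟩ := hfeas
    obtain ⟨b, -⟩ := hcov.1 (Classical.arbitrary Y)
    exact Fintype.card_pos_iff.2 ⟨b⟩
  have hdbig : mincost + Fintype.card Y < d := by
    have h2 : Fintype.card Y ≤ Fintype.card Y * Fintype.card B :=
      le_mul_of_one_le_right (Nat.zero_le _) hBpos
    omega
  -- the per-`j` "good" structure when the head count is below `d`
  have hGoodOf : ∀ j ∈ Finset.Icc 1 t, (HDj Υ j).card < d →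
      ∀ y : Y, ∃ b, (⟨{PV.u (Sum.inr (y, b))}, {PV.v j}⟩ : Clause (PV X Y A B)) ∈ Υ ∧
        ∀ z, (z, y) ∈ I.E → ∃ a,
          (⟨{PV.u (Sum.inl (z, a))}, {PV.v j}⟩ : Clause (PV X Y A B)) ∈ Υ ∧
          (a, b) ∈ I.cst (z, y) := by
    intro j hj hlt
    set layers : Finset ℕ := (HDj Υ j).image (fun w =>
      match w with
      | PV.e _ _ i => i
      | PV.el _ _ _ i => i
      | _ => 0) with hlayers
    have hnsub : ¬ (Finset.Icc 1 d ⊆ layers) := by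
      intro hsub
      have := Finset.card_le_card hsub
      rw [Nat.card_Icc] at this
      have hle := Finset.card_image_le (s := HDj Υ j) (f := fun w =>
        match w with
        | PV.e _ _ i => i
        | PV.el _ _ _ i => i
        | _ => 0)
      rw [← hlayers] at hle
      omega
    obtain ⟨istar, histar, hnis⟩ := Finset.not_subset.1 hnsub
    refine core_good hfeas hnoIsoY hPH hprime hrep hj histar ?_ 
    intro w hw x y i hshape
    rintro rfl
    refine hnis ?_
    rcases hshape with rfl | ⟨b, rfl⟩ <;>
      exact Finset.mem_image.2 ⟨_, hw, rfl⟩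
  -- counting the labels extracted from the `v j`-clauses
  have hSXY : ∀ j : ℕ, (∑ x, (fjX Υ j x).card) + (∑ y, (fjY Υ j y).card) ≤ (HDj Υ j).card := by
    intro j
    set UL : Finset (PV X Y A B) :=
      (((Finset.univ : Finset (X × A)).filter fun p =>
        (⟨{PV.u (Sum.inl p)}, {PV.v j}⟩ : Clause (PV X Y A B)) ∈ Υ).image
          fun p => (PV.u (Sum.inl p) : PV X Y A B)) ∪
      (((Finset.univ : Finset (Y × B)).filter fun p =>
        (⟨{PV.u (Sum.inr p)}, {PV.v j}⟩ : Clause (PV X Y A B)) ∈ Υ).image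
          fun p => (PV.u (Sum.inr p) : PV X Y A B)) with hUL
    have hULsub : UL ⊆ HDj Υ j := by
      intro w hw
      rcases Finset.mem_union.1 hw with hw' | hw'
      · obtain ⟨p, hp, rfl⟩ := Finset.mem_image.1 hw'
        exact (mem_HDj hPH).2 (Finset.mem_filter.1 hp).2
      · obtain ⟨p, hp, rfl⟩ := Finset.mem_image.1 hw'
        exact (mem_HDj hPH).2 (Finset.mem_filter.1 hp).2
    have hinj1 : Function.Injective fun p : X × A => (PV.u (Sum.inl p) : PV X Y A B) := by
      intro p q h
      injection h with h'
      exact Sum.inl_injective h'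
    have hinj2 : Function.Injective fun p : Y × B => (PV.u (Sum.inr p) : PV X Y A B) := by
      intro p q h
      injection h with h'
      exact Sum.inr_injective h'
    have hdisj : Disjoint
        (((Finset.univ : Finset (X × A)).filter fun p =>
          (⟨{PV.u (Sum.inl p)}, {PV.v j}⟩ : Clause (PV X Y A B)) ∈ Υ).image
            fun p => (PV.u (Sum.inl p) : PV X Y A B))
        (((Finset.univ : Finset (Y × B)).filter fun p =>
          (⟨{PV.u (Sum.inr p)}, {PV.v j}⟩ : Clause (PV X Y A B)) ∈ Υ).image
            fun p => (PV.u (Sum.inr p) : PV X Y A B)) := by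
      refine Finset.disjoint_left.2 fun w h1 h2 => ?_
      obtain ⟨p, -, rfl⟩ := Finset.mem_image.1 h1
      obtain ⟨q, -, hq⟩ := Finset.mem_image.1 h2
      injection hq with h'
      exact nomatch h'
    have hcardUL : UL.card = (∑ x, (fjX Υ j x).card) + (∑ y, (fjY Υ j y).card) := by
      rw [hUL, Finset.card_union_of_disjoint hdisj,
        Finset.card_image_of_injective _ hinj1, Finset.card_image_of_injective _ hinj2,
        card_filter_prod, card_filter_prod]
      rfl
    calc (∑ x, (fjX Υ j x).card) + (∑ y, (fjY Υ j y).card) = UL.card := hcardUL.symm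
      _ ≤ (HDj Υ j).card := Finset.card_le_card hULsub
  -- the lower bound
  have hlow : ∀ j ∈ Finset.Icc 1 t, mincost + Fintype.card Y ≤ (HDj Υ j).card := by
    intro j hj
    by_cases hdle : d ≤ (HDj Υ j).card
    · omega
    · have hGood := hGoodOf j hj (lt_of_not_ge hdle)
      choose bfun hbfun using hGood
      have hbY : ∀ y, bfun y ∈ fjY Υ j y := fun y =>
        Finset.mem_filter.2 ⟨Finset.mem_univ _, (hbfun y).1⟩
      have hcovj : I.IsTotalCover (fjX Υ j) (fun y => {bfun y}) := by
        refine ⟨fun y => Finset.singleton_nonempty _, fun e he b hb => ?_⟩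
        rw [Finset.mem_singleton] at hb
        subst hb
        obtain ⟨a, ha, hab⟩ := (hbfun e.2).2 e.1 he
        exact ⟨a, Finset.mem_filter.2 ⟨Finset.mem_univ _, ha⟩, hab⟩
      have h1 : mincost ≤ ∑ x, (fjX Υ j x).card := hminle _ _ hcovj
      have h2 : Fintype.card Y ≤ ∑ y, (fjY Υ j y).card := by
        rw [← Finset.card_univ, Finset.card_eq_sum_ones]
        exact Finset.sum_le_sum fun y _ => Finset.card_pos.2 ⟨bfun y, hbY y⟩
      exact le_trans (Nat.add_le_add h1 h2) (hSXY j)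
  -- equality for every j
  have heq : ∀ j ∈ Finset.Icc 1 t, (HDj Υ j).card = mincost + Fintype.card Y := by
    intro j hj
    have hsum_ge : ∑ j ∈ Finset.Icc 1 t, (mincost + Fintype.card Y)
        ≤ ∑ j ∈ Finset.Icc 1 t, (HDj Υ j).card := Finset.sum_le_sum hlow
    have hconst : ∑ _j ∈ Finset.Icc 1 t, (mincost + Fintype.card Y)
        = t * (mincost + Fintype.card Y) := by
      rw [Finset.sum_const, Nat.card_Icc]
      simp [Nat.smul_one_eq_cast]
    have hsums : ∑ j ∈ Finset.Icc 1 t, (mincost + Fintype.card Y)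
        = ∑ j ∈ Finset.Icc 1 t, (HDj Υ j).card := le_antisymm hsum_ge (by omega)
    exact ((Finset.sum_eq_sum_iff_of_le hlow).1 hsums j hj).symm
  -- final extraction
  intro j hj
  have hcardj : (HDj Υ j).card = mincost + Fintype.card Y := heq j hj
  have hGood := hGoodOf j hj (by omega)
  choose bfun hbfun using hGood
  have hbY : ∀ y, bfun y ∈ fjY Υ j y := fun y =>
    Finset.mem_filter.2 ⟨Finset.mem_univ _, (hbfun y).1⟩
  have hcovj : I.IsTotalCover (fjX Υ j) (fun y => {bfun y}) := by
    refine ⟨fun y => Finset.singleton_nonempty _, fun e he b hb => ?_⟩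
    rw [Finset.mem_singleton] at hb
    subst hb
    obtain ⟨a, ha, hab⟩ := (hbfun e.2).2 e.1 he
    exact ⟨a, Finset.mem_filter.2 ⟨Finset.mem_univ _, ha⟩, hab⟩
  have h1 : mincost ≤ ∑ x, (fjX Υ j x).card := hminle _ _ hcovj
  have h2 : Fintype.card Y ≤ ∑ y, (fjY Υ j y).card := by
    rw [← Finset.card_univ, Finset.card_eq_sum_ones]
    exact Finset.sum_le_sum fun y _ => Finset.card_pos.2 ⟨bfun y, hbY y⟩
  have hSXYj := hSXY j
  rw [hcardj] at hSXYj
  have hSX : ∑ x, (fjX Υ j x).card = mincost := by omega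
  have hSY : ∑ y, (fjY Υ j y).card = Fintype.card Y := by omega
  have htight : ∀ y, (fjY Υ j y).card = 1 := by
    have hle : ∀ y ∈ (Finset.univ : Finset Y), 1 ≤ (fjY Υ j y).card :=
      fun y _ => Finset.card_pos.2 ⟨bfun y, hbY y⟩
    have hsums : ∑ _y : Y, 1 = ∑ y, (fjY Υ j y).card := by
      rw [hSY]
      simp
    intro y
    exact ((Finset.sum_eq_sum_iff_of_le hle).1 hsums y (Finset.mem_univ y)).symm
  have hfjYeq : ∀ y, fjY Υ j y = {bfun y} := by
    intro y
    refine Finset.eq_singleton_iff_unique_mem.2 ⟨hbY y, fun b hb => ?_⟩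
    exact Finset.card_le_one.1 (le_of_eq (htight y)) b hb (bfun y) (hbY y)
  refine ⟨⟨fun y => ⟨bfun y, hbY y⟩, fun e he b hb => ?_⟩, htight, ?_⟩
  · rw [hfjYeq e.2, Finset.mem_singleton] at hb
    subst hb
    obtain ⟨a, ha, hab⟩ := (hbfun e.2).2 e.1 he
    exact ⟨a, Finset.mem_filter.2 ⟨Finset.mem_univ _, ha⟩, hab⟩
  · intro f' g' hcov'
    have hXpos : (0 : ℚ) < (Fintype.card X : ℚ) := by
      exact_mod_cast Fintype.card_pos
    have hcastX : ∑ x, ((fjX Υ j x).card : ℚ) = (mincost : ℚ) := by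
      rw [← Nat.cast_sum, hSX]
    have hcastf : ((∑ x, (f' x).card : ℕ) : ℚ) = ∑ x, ((f' x).card : ℚ) := Nat.cast_sum _ _
    unfold lcCost
    rw [hcastX, ← hcastf]
    exact (div_le_div_iff_of_pos_right hXpos).2 (by exact_mod_cast hminle f' g' hcov')
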